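/- Let A be an abelian torsion group with no elements of order 2. Then the short exact sequence 1 → ∇(A) → A ⊗ A → A ∧ A → 1 splits on the left; consequently A ⊗ A ≅ ∇(A) × (A ∧ A). -/

import Mathlib

/- Nonabelian tensor square framework (Brown–Loday). -/

namespace NATensor

variable (G : Type*) [Group G]

/-- The relator set for the nonabelian tensor square of `G`:
`g g' ⊗ h = (ᵍg' ⊗ ᵍh)(g ⊗ h)` and `g ⊗ h h' = (g ⊗ h)(ʰg ⊗ ʰh')`. -/
def rels : Set (FreeGroup (G × G)) :=
  {r | (∃ g g' h : G,
          r = FreeGroup.of (g * g', h) *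
              (FreeGroup.of (g * g' * g⁻¹, g * h * g⁻¹) * FreeGroup.of (g, h))⁻¹) ∨
       (∃ g h h' : G,
          r = FreeGroup.of (g, h * h') *
              (FreeGroup.of (g, h) * FreeGroup.of (h * g * h⁻¹, h * h' * h⁻¹))⁻¹)}

/-- The nonabelian tensor square `G ⊗ G`. -/
abbrev TS := PresentedGroup (rels G)

variable {G}

/-- The generator `g ⊗ h` of the nonabelian tensor square. -/
def tmul (g h : G) : TS G := PresentedGroup.of (g, h)

lemma mk_rel_eq_one {r : FreeGroup (G × G)} (hr : r ∈ rels G) :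
    (PresentedGroup.mk (rels G) r : TS G) = 1 :=
  (QuotientGroup.eq_one_iff r).mpr (Subgroup.subset_normalClosure hr)

lemma tmul_rel₁ (g g' h : G) :
    tmul (g * g') h = tmul (g * g' * g⁻¹) (g * h * g⁻¹) * tmul g h := by
  have h1 := mk_rel_eq_one (G := G) (Or.inl ⟨g, g', h, rfl⟩)
  simp only [map_mul, map_inv, mul_inv_eq_one] at h1
  exact h1

lemma tmul_rel₂ (g h h' : G) :
    tmul g (h * h') = tmul g h * tmul (h * g * h⁻¹) (h * h' * h⁻¹) := by
  have h1 := mk_rel_eq_one (G := G) (Or.inr ⟨g, h, h', rfl⟩)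
  simp only [map_mul, map_inv, mul_inv_eq_one] at h1
  exact h1

variable (G)

/-- The homomorphism `κ : G ⊗ G → G`, `g ⊗ h ↦ [g,h] = g h g⁻¹ h⁻¹` (its image is `[G,G]`). -/
def kappa : TS G →* G :=
  PresentedGroup.toGroup (f := fun x : G × G => x.1 * x.2 * x.1⁻¹ * x.2⁻¹) (by
    rintro r (⟨g, g', h, rfl⟩ | ⟨g, h, h', rfl⟩) <;>
      simp only [map_mul, map_inv, FreeGroup.lift_apply_of] <;> group)

variable {G}

@[simp] lemma kappa_tmul (g h : G) : kappa G (tmul g h) = g * h * g⁻¹ * h⁻¹ :=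
  PresentedGroup.toGroup.of _

variable (G)

/-- `J(G) = ker κ ≅ π₃(SK(G,1))`. -/
def J : Subgroup (TS G) := (kappa G).ker

/-- `∇(G)`: the (normal) subgroup of `G ⊗ G` generated by the elements `x ⊗ x`. -/
def nabla : Subgroup (TS G) :=
  Subgroup.normalClosure {t | ∃ x : G, t = tmul x x}

/-- `Δ(G)`: the (normal) subgroup of `G ⊗ G` generated by the `(x ⊗ y)(y ⊗ x)`. -/
def delta : Subgroup (TS G) :=
  Subgroup.normalClosure {t | ∃ x y : G, t = tmul x y * tmul y x}

instance : (nabla G).Normal := Subgroup.normalClosure_normal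

instance : (delta G).Normal := Subgroup.normalClosure_normal

/-- The exterior square `G ∧ G = (G ⊗ G)/∇(G)`. -/
abbrev ES := TS G ⧸ nabla G

/-- The symmetric square `G ⊗̃ G = (G ⊗ G)/Δ(G)`. -/
abbrev SS := TS G ⧸ delta G

variable {G}

/-- The element `g ∧ h` of the exterior square. -/
def emul (g h : G) : ES G := QuotientGroup.mk' (nabla G) (tmul g h)

/-- The image of `g ⊗ h` in the symmetric square. -/
def smul (g h : G) : SS G := QuotientGroup.mk' (delta G) (tmul g h)

variable {H : Type*} [Group H]

/-- The induced homomorphism `G ⊗ G → H ⊗ H` of a homomorphism `f : G → H`. -/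
def tmap (f : G →* H) : TS G →* TS H :=
  PresentedGroup.toGroup (f := fun x : G × G => tmul (f x.1) (f x.2)) (by
    rintro r (⟨g, g', h, rfl⟩ | ⟨g, h, h', rfl⟩) <;>
      simp only [map_mul, map_inv, FreeGroup.lift_apply_of, mul_inv_eq_one]
    · rw [tmul_rel₁]
    · rw [tmul_rel₂])

@[simp] lemma tmap_tmul (f : G →* H) (g h : G) :
    tmap f (tmul g h) = tmul (f g) (f h) :=
  PresentedGroup.toGroup.of _

lemma nabla_le_comap_nabla (f : G →* H) :
    nabla G ≤ MonoidHom.ker ((QuotientGroup.mk' (nabla H)).comp (tmap f)) := by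
  refine Subgroup.normalClosure_le_normal ?_
  rintro _ ⟨y, rfl⟩
  simp only [SetLike.mem_coe, MonoidHom.mem_ker, MonoidHom.comp_apply, tmap_tmul,
    QuotientGroup.mk'_apply, QuotientGroup.eq_one_iff]
  exact Subgroup.subset_normalClosure ⟨f y, rfl⟩

lemma delta_le_comap_delta (f : G →* H) :
    delta G ≤ MonoidHom.ker ((QuotientGroup.mk' (delta H)).comp (tmap f)) := by
  refine Subgroup.normalClosure_le_normal ?_
  rintro _ ⟨x, y, rfl⟩
  simp only [SetLike.mem_coe, MonoidHom.mem_ker, MonoidHom.comp_apply, map_mul, tmap_tmul,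
    QuotientGroup.mk'_apply, ← QuotientGroup.mk_mul, QuotientGroup.eq_one_iff]
  exact Subgroup.subset_normalClosure ⟨f x, f y, rfl⟩

/-- The induced homomorphism `G ∧ G → H ∧ H` of a homomorphism `f : G → H`. -/
def emap (f : G →* H) : ES G →* ES H :=
  QuotientGroup.lift (nabla G) ((QuotientGroup.mk' (nabla H)).comp (tmap f))
    (fun x hx => MonoidHom.mem_ker.mp (nabla_le_comap_nabla f hx))

@[simp] lemma emap_emul (f : G →* H) (g h : G) :
    emap f (emul g h) = emul (f g) (f h) := by
  simp [emap, emul, QuotientGroup.mk'_apply, QuotientGroup.lift_mk']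
  exact (QuotientGroup.lift_mk _ _ _).trans (by simp)

/-- The induced homomorphism `G ⊗̃ G → H ⊗̃ H` of a homomorphism `f : G → H`. -/
def smap (f : G →* H) : SS G →* SS H :=
  QuotientGroup.lift (delta G) ((QuotientGroup.mk' (delta H)).comp (tmap f))
    (fun x hx => MonoidHom.mem_ker.mp (delta_le_comap_delta f hx))

variable (G)

lemma nabla_le_ker_kappa : nabla G ≤ (kappa G).ker := by
  refine Subgroup.normalClosure_le_normal ?_
  rintro _ ⟨x, rfl⟩
  simp only [SetLike.mem_coe, MonoidHom.mem_ker, kappa_tmul]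
  group

/-- The homomorphism `κ' : G ∧ G → G`, `g ∧ h ↦ [g,h]` (its image is `[G,G]`). -/
def kappa' : ES G →* G :=
  QuotientGroup.lift (nabla G) (kappa G)
    (fun x hx => MonoidHom.mem_ker.mp (nabla_le_ker_kappa G hx))

/-- The Schur multiplier `M(G) = ker κ' ≅ H₂(G)`. -/
def M : Subgroup (ES G) := (kappa' G).ker

/-- `J̃(G) = J(G)/Δ(G) ≅ π₂ˢ(K(G,1))`, realized as the image of `J(G)` in `G ⊗̃ G`. -/
def Jt : Subgroup (SS G) := Subgroup.map (QuotientGroup.mk' (delta G)) (J G)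

/-- `∇(G)/Δ(G)`, realized as the image of `∇(G)` in `G ⊗̃ G`. -/
def nablaBar : Subgroup (SS G) := Subgroup.map (QuotientGroup.mk' (delta G)) (nabla G)

end NATensor

namespace NATensor
section Comm
variable {A : Type*} [CommGroup A]

lemma tmul_mul_left (g g' h : A) : tmul (g * g') h = tmul g' h * tmul g h := by
  simpa [mul_inv_cancel_comm] using tmul_rel₁ g g' h

lemma tmul_mul_right (g h h' : A) : tmul g (h * h') = tmul g h * tmul g h' := by
  simpa [mul_inv_cancel_comm] using tmul_rel₂ g h h'

private lemma tmul_commute_aux (g h g' h' : A) :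
    tmul g h' * tmul g' h = tmul g' h * tmul g h' := by
  have e1 : tmul (g' * g) (h * h') = tmul g h * (tmul g h' * tmul g' h) * tmul g' h' := by
    rw [tmul_mul_left, tmul_mul_right, tmul_mul_right]; group
  have e2 : tmul (g' * g) (h * h') = tmul g h * (tmul g' h * tmul g h') * tmul g' h' := by
    rw [tmul_mul_right, tmul_mul_left, tmul_mul_left]; group
  have := mul_right_cancel (e1.symm.trans e2)
  exact mul_left_cancel this

lemma tmul_commute (g h g' h' : A) : Commute (tmul g h) (tmul g' h') :=
  tmul_commute_aux g h' g' h
end Comm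
end NATensor
namespace NATensor
section Comm2
variable {A : Type*} [CommGroup A]

lemma ts_mul_comm (x y : TS A) : x * y = y * x := by
  have hgen : ∀ g h : A, tmul g h ∈ Subgroup.center (TS A) := by
    intro g h
    rw [Subgroup.mem_center_iff]
    intro z
    have hz : z ∈ Subgroup.closure (Set.range (PresentedGroup.of : A × A → TS A)) := by
      rw [PresentedGroup.closure_range_of]; trivial
    induction hz using Subgroup.closure_induction with
    | mem w hw =>
        obtain ⟨⟨a, b⟩, rfl⟩ := hw
        exact (tmul_commute g h a b).symm
    | one => simp
    | mul a b _ _ ha hb => rw [mul_assoc, hb, ← mul_assoc, ha, mul_assoc]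
    | inv a _ ha => exact Commute.inv_left ha
  have hx : x ∈ Subgroup.center (TS A) := by
    have hx' : x ∈ Subgroup.closure (Set.range (PresentedGroup.of : A × A → TS A)) := by
      rw [PresentedGroup.closure_range_of]; trivial
    induction hx' using Subgroup.closure_induction with
    | mem w hw => obtain ⟨⟨a, b⟩, rfl⟩ := hw; exact hgen a b
    | one => exact Subgroup.one_mem _
    | mul a b _ _ ha hb => exact Subgroup.mul_mem _ ha hb
    | inv a _ ha => exact Subgroup.inv_mem _ ha
  exact (Subgroup.mem_center_iff.mp hx y).symm
end Comm2
end NATensor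
namespace NATensor
section Comm3
variable {A : Type*} [CommGroup A]

noncomputable instance tsCommGroup : CommGroup (TS A) :=
  { (inferInstance : Group (TS A)) with mul_comm := ts_mul_comm }

@[simp] lemma tmul_one_left (h : A) : tmul (1 : A) h = 1 := by
  have := tmul_mul_left (1 : A) 1 h
  rw [mul_one] at this
  exact (mul_left_cancel (a := tmul (1:A) h) (by rw [← this, mul_one])).symm

@[simp] lemma tmul_one_right (g : A) : tmul g (1 : A) = 1 := by
  have := tmul_mul_right g (1 : A) 1
  rw [mul_one] at this
  exact (mul_left_cancel (a := tmul g (1:A)) (by rw [← this, mul_one])).symm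

lemma tmul_pow_left (g h : A) (n : ℕ) : tmul g h ^ n = tmul (g ^ n) h := by
  induction n with
  | zero => simp
  | succ n ih => rw [pow_succ, pow_succ, tmul_mul_left, ih, mul_comm]

/-- In an abelian group, the set of elements killed by some odd power is a subgroup. -/
def oddTorsion (B : Type*) [CommGroup B] : Subgroup B where
  carrier := {x | ∃ n : ℕ, Odd n ∧ x ^ n = 1}
  one_mem' := ⟨1, odd_one, one_pow 1⟩
  mul_mem' := by
    rintro x y ⟨m, hm, hxm⟩ ⟨n, hn, hyn⟩
    exact ⟨m * n, hm.mul hn, by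
      rw [mul_pow, pow_mul x, pow_mul' y, hxm, hyn, one_pow, one_pow, one_mul]⟩
  inv_mem' := by
    rintro x ⟨n, hn, hxn⟩
    exact ⟨n, hn, by rw [inv_pow, hxn, inv_one]⟩

lemma odd_pow_eq_one (htor : ∀ a : A, IsOfFinOrder a) (h2 : ∀ a : A, a ^ 2 = 1 → a = 1)
    (a : A) : ∃ n : ℕ, Odd n ∧ a ^ n = 1 := by
  refine ⟨orderOf a, ?_, pow_orderOf_eq_one a⟩
  rcases Nat.even_or_odd (orderOf a) with he | ho
  · obtain ⟨m, hm⟩ := he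
    have hmne : orderOf a ≠ 0 := (htor a).orderOf_pos.ne'
    have ham : (a ^ m) ^ 2 = 1 := by
      rw [← pow_mul]; rw [show m * 2 = orderOf a by omega]; exact pow_orderOf_eq_one a
    have := h2 _ ham
    have hdvd : orderOf a ∣ m := orderOf_dvd_of_pow_eq_one this
    have : m ≠ 0 := by rintro rfl; omega
    have := Nat.le_of_dvd (Nat.pos_of_ne_zero this) hdvd
    omega
  · exact ho

lemma ts_odd_torsion (htor : ∀ a : A, IsOfFinOrder a) (h2 : ∀ a : A, a ^ 2 = 1 → a = 1)
    (x : TS A) : ∃ n : ℕ, Odd n ∧ x ^ n = 1 := by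
  have hx : x ∈ Subgroup.closure (Set.range (PresentedGroup.of : A × A → TS A)) := by
    rw [PresentedGroup.closure_range_of]; trivial
  have : x ∈ oddTorsion (TS A) := by
    refine Subgroup.closure_le (oddTorsion (TS A)) |>.mpr ?_ hx
    rintro _ ⟨⟨g, h⟩, rfl⟩
    obtain ⟨n, hn, hgn⟩ := odd_pow_eq_one htor h2 g
    exact ⟨n, hn, by rw [show (PresentedGroup.of (g, h) : TS A) = tmul g h from rfl,
      tmul_pow_left, hgn, tmul_one_left]⟩
  exact this
end Comm3
end NATensor
namespace NATensor
section Comm4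
variable {A : Type*} [CommGroup A]

/-- The flip homomorphism `σ : A ⊗ A → A ⊗ A`, `g ⊗ h ↦ h ⊗ g`, for abelian `A`. -/
def tswap : TS A →* TS A :=
  PresentedGroup.toGroup (f := fun x : A × A => tmul x.2 x.1) (by
    rintro r (⟨g, g', h, rfl⟩ | ⟨g, h, h', rfl⟩) <;>
      simp only [map_mul, map_inv, FreeGroup.lift_apply_of, mul_inv_eq_one, mul_inv_cancel_comm]
    · rw [tmul_mul_right, mul_comm]
    · rw [tmul_mul_left, mul_comm])

@[simp] lemma tswap_tmul (g h : A) : tswap (tmul g h) = tmul h g :=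
  PresentedGroup.toGroup.of _

lemma tmul_mem_nabla (g : A) : tmul g g ∈ nabla A :=
  Subgroup.subset_normalClosure ⟨g, rfl⟩

lemma tmul_mul_swap_mem_nabla (g h : A) : tmul g h * tmul h g ∈ nabla A := by
  have key : tmul g h * tmul h g = tmul (g * h) (g * h) * (tmul g g)⁻¹ * (tmul h h)⁻¹ := by
    rw [tmul_mul_left, tmul_mul_right, tmul_mul_right]
    simp only [mul_assoc, mul_comm, mul_left_comm]
    group
  rw [key]
  exact mul_mem (mul_mem (tmul_mem_nabla _) (inv_mem (tmul_mem_nabla _)))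
    (inv_mem (tmul_mem_nabla _))

end Comm4
end NATensor
namespace NATensor
section Comm5
variable {A : Type*} [CommGroup A]

lemma eq_one_of_sq_eq_one_of_odd {B : Type*} [CommGroup B] {z : B} {n : ℕ}
    (h2 : z ^ 2 = 1) (hn : Odd n) (hzn : z ^ n = 1) : z = 1 := by
  obtain ⟨k, hk⟩ := hn
  have : z ^ (n + 1) = z := by rw [pow_succ, hzn, one_mul]
  rw [show n + 1 = 2 * (k + 1) by omega, pow_mul, h2, one_pow] at this
  exact this.symm

lemma ts_sq_bijective (htor : ∀ a : A, IsOfFinOrder a) (h2 : ∀ a : A, a ^ 2 = 1 → a = 1) :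
    Function.Bijective (powMonoidHom 2 : TS A →* TS A) := by
  constructor
  · intro x y hxy
    simp only [powMonoidHom_apply] at hxy
    have hz : (x * y⁻¹) ^ 2 = 1 := by
      rw [mul_pow, hxy, inv_pow, mul_inv_cancel]
    obtain ⟨n, hn, hzn⟩ := ts_odd_torsion htor h2 (x * y⁻¹)
    have := eq_one_of_sq_eq_one_of_odd hz hn hzn
    exact mul_inv_eq_one.mp this
  · intro x
    obtain ⟨n, hn, hxn⟩ := ts_odd_torsion htor h2 x
    obtain ⟨k, hk⟩ := hn
    refine ⟨x ^ (k + 1), ?_⟩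
    simp only [powMonoidHom_apply]
    rw [← pow_mul, show (k + 1) * 2 = n + 1 by omega, pow_succ, hxn, one_mul]

end Comm5
end NATensor

open NATensor in
/-- for an abelian torsion group `A` with no elements of order 2, the short
exact sequence `1 → ∇(A) → A ⊗ A → A ∧ A → 1` splits on the left; consequently
`A ⊗ A ≅ ∇(A) × (A ∧ A)`. -/
theorem tensor_square_splits_of_torsion_abelian (A : Type*) [CommGroup A]
    (htor : ∀ a : A, IsOfFinOrder a) (h2 : ∀ a : A, a ^ 2 = 1 → a = 1) :
    (∃ α : TS A →* ↥(nabla A), ∀ y : ↥(nabla A), α (y : TS A) = y) ∧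
    Nonempty (TS A ≃* ↥(nabla A) × ES A) := by
  -- the square-root automorphism
  set E : TS A ≃* TS A := MulEquiv.ofBijective _ (ts_sq_bijective htor h2) with hE
  have hE_apply : ∀ x : TS A, E x = x ^ 2 := fun x => rfl
  have hsqrt_mem : ∀ {x : TS A}, x ∈ nabla A → E.symm x ∈ nabla A := by
    intro x hx
    obtain ⟨n, hn, hxn⟩ := ts_odd_torsion htor h2 x
    obtain ⟨k, hk⟩ := hn
    have hx' : E.symm x = x ^ (k + 1) := by
      apply E.injective
      rw [MulEquiv.apply_symm_apply, hE_apply, ← pow_mul,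
        show (k + 1) * 2 = n + 1 by omega, pow_succ, hxn, one_mul]
    rw [hx']
    exact pow_mem hx _
  -- the homomorphism β : x ↦ √(x · σ x)
  set β : TS A →* TS A := E.symm.toMonoidHom.comp (MonoidHom.id (TS A) * tswap) with hβ
  have hβ_apply : ∀ x : TS A, β x = E.symm (x * tswap x) := fun x => rfl
  have hβ_mem : ∀ x : TS A, β x ∈ nabla A := by
    intro x
    have hx : x ∈ Subgroup.closure (Set.range (PresentedGroup.of : A × A → TS A)) := by
      rw [PresentedGroup.closure_range_of]; trivial
    have : x ∈ (nabla A).comap β := by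
      refine Subgroup.closure_le ((nabla A).comap β) |>.mpr ?_ hx
      rintro _ ⟨⟨g, h⟩, rfl⟩
      show β (tmul g h) ∈ nabla A
      rw [hβ_apply, tswap_tmul]
      exact hsqrt_mem (tmul_mul_swap_mem_nabla g h)
    exact this
  -- β fixes nabla pointwise
  have hβ_fix : ∀ {x : TS A}, x ∈ nabla A → β x = x := by
    intro x hx
    have hsub : nabla A ≤ β.eqLocus (MonoidHom.id (TS A)) := by
      refine Subgroup.normalClosure_le_normal ?_
      rintro _ ⟨y, rfl⟩
      show β (tmul y y) = tmul y y
      rw [hβ_apply, tswap_tmul]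
      apply E.injective
      rw [MulEquiv.apply_symm_apply, hE_apply, pow_two]
    exact hsub hx
  set α : TS A →* ↥(nabla A) := β.codRestrict (nabla A) hβ_mem with hα
  have hα_fix : ∀ y : ↥(nabla A), α (y : TS A) = y := by
    intro y
    exact Subtype.ext (hβ_fix y.2)
  refine ⟨⟨α, hα_fix⟩, ?_⟩
  -- the isomorphism
  set ψ : TS A →* ↥(nabla A) × ES A := α.prod (QuotientGroup.mk' (nabla A)) with hψ
  have hψ_bij : Function.Bijective ψ := by
    constructor
    · intro x y hxy
      have h1 : α x = α y := congrArg Prod.fst hxy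
      have h2' : QuotientGroup.mk' (nabla A) x = QuotientGroup.mk' (nabla A) y := congrArg Prod.snd hxy
      rw [QuotientGroup.mk'_eq_mk'] at h2'
      obtain ⟨z, hz, rfl⟩ := h2'
      have hβx : β (x * z) = β x * z := by
        rw [map_mul, hβ_fix hz]
      have : (α (x * z) : TS A) = (α x : TS A) := congrArg Subtype.val h1.symm ▸ rfl
      have h3 : β (x * z) = β x := congrArg Subtype.val h1.symm
      rw [hβx] at h3
      have hz1 : z = 1 := mul_left_cancel (h3.trans (mul_one (β x)).symm)
      rw [hz1, mul_one]
    · rintro ⟨⟨n, hn⟩, q⟩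
      obtain ⟨x, rfl⟩ := QuotientGroup.mk'_surjective (nabla A) q
      refine ⟨x * (β x)⁻¹ * n, ?_⟩
      have hmem : (β x)⁻¹ * n ∈ nabla A := mul_mem (inv_mem (hβ_mem x)) hn
      refine Prod.ext ?_ ?_
      · apply Subtype.ext
        show β (x * (β x)⁻¹ * n) = n
        rw [mul_assoc, map_mul, map_mul, map_inv, hβ_fix (hβ_mem x), hβ_fix hn,
          mul_inv_cancel_left]
      · show QuotientGroup.mk' (nabla A) _ = QuotientGroup.mk' (nabla A) x
        rw [mul_assoc, map_mul]
        rw [show QuotientGroup.mk' (nabla A) ((β x)⁻¹ * n) = 1 from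
          (QuotientGroup.eq_one_iff _).mpr hmem, mul_one]
  exact ⟨MulEquiv.ofBijective ψ hψ_bij⟩
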